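/- Let M be a mixed abelian category and let f: X -> Y be a morphism in M. If the induced morphism gr_n f: gr_n X -> gr_n Y is zero for every integer n, then f = 0. -/

import Mathlib

/-!
STATEMENT 2: In a mixed abelian category, if a morphism f : X ⟶ Y induces the zero
map gr_n f : gr_n X ⟶ gr_n Y on every graded piece of the weight filtration, then
f = 0.  The weight filtration is given as functorial data: subobject functors `W n`
with monomorphisms into the identity, exhaustive and separated, whose subquotients
have the correct weights, and graded pieces `G n` = (W n)/(W (n-1)).
-/

open CategoryTheory Limits

universe v u

/-- `S` is a subquotient of `X` (for `S` simple, this says `S` is a composition factor). -/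
def IsSubquotient {C : Type u} [Category.{v} C] (S X : C) : Prop :=
  ∃ (Y : C) (i : Y ⟶ X) (p : Y ⟶ S), Mono i ∧ Epi p

section Aux

variable {C : Type u} [Category.{v} C] [Abelian C]

lemma aux_from_simple {T Z : C} (hT : Simple T) (f : T ⟶ Z) : f = 0 ∨ Mono f := by
  by_cases h : kernel.ι f = 0
  · exact Or.inr (Abelian.mono_of_kernel_ι_eq_zero f h)
  · left
    haveI : IsIso (kernel.ι f) := isIso_of_mono_of_nonzero h
    rw [← cancel_epi (kernel.ι f), kernel.condition, comp_zero]

lemma aux_isZero_of_epi_zero {A B : C} (f : A ⟶ B) (hf : Epi f) (h : f = 0) : IsZero B := by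
  rw [IsZero.iff_id_eq_zero]
  exact (cancel_epi f).mp (by simp [h])

lemma aux_isZero_of_mono_zero {A B : C} (f : A ⟶ B) (hf : Mono f) (h : f = 0) : IsZero A := by
  rw [IsZero.iff_id_eq_zero]
  exact (cancel_mono f).mp (by simp [h])

lemma aux_exists_simple_quotient {K : C} [IsNoetherianObject K] (h : ¬ IsZero K) :
    ∃ (T : C) (t : K ⟶ T), Simple T ∧ Epi t := by
  haveI : Nontrivial (Subobject K) := Subobject.nontrivial_of_not_isZero h
  obtain ⟨M, hMs, hMmax⟩ := (wellFounded_gt (α := Subobject K)).has_min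
    {N : Subobject K | N ≠ ⊤} ⟨⊥, bot_ne_top⟩
  refine ⟨cokernel M.arrow, cokernel.π M.arrow, ?_, inferInstance⟩
  apply simple_of_cosimple
  intro Z f hf
  constructor
  · intro hiso h0
    have hz : IsZero (cokernel M.arrow) := aux_isZero_of_mono_zero f inferInstance h0
    have hπ : cokernel.π M.arrow = 0 := hz.eq_of_tgt _ _
    haveI : Epi M.arrow := Abelian.epi_of_cokernel_π_eq_zero _ hπ
    haveI : IsIso M.arrow := isIso_of_mono_of_epi _
    exact hMs ((Subobject.isIso_arrow_iff_eq_top M).mp inferInstance)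
  · intro hf0
    set q := cokernel.π M.arrow ≫ f with hq
    haveI : Epi q := epi_comp _ _
    have hMq : M.arrow ≫ q = 0 := by
      rw [hq, ← Category.assoc, cokernel.condition, zero_comp]
    have hMN : M ≤ Subobject.mk (kernel.ι q) := by
      have := Subobject.mk_le_mk_of_comm (kernel.lift q M.arrow hMq) (kernel.lift_ι _ _ _)
      rwa [Subobject.mk_arrow] at this
    have hNtop : Subobject.mk (kernel.ι q) ≠ ⊤ := by
      intro htop
      haveI : IsIso (kernel.ι q) := (Subobject.isIso_iff_mk_eq_top _).mpr htop
      have hq0 : q = 0 := by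
        rw [← cancel_epi (kernel.ι q), kernel.condition, comp_zero]
      rw [hq] at hq0
      exact hf0 (by rwa [← cancel_epi (cokernel.π M.arrow), comp_zero])
    have hNM : Subobject.mk (kernel.ι q) = M := by
      by_contra hne
      exact hMmax _ hNtop (hMN.lt_of_ne (Ne.symm hne))
    have hle : Subobject.mk (kernel.ι q) ≤ Subobject.mk M.arrow := by
      rw [Subobject.mk_arrow]; exact le_of_eq hNM
    have hφ := Subobject.ofMkLEMk_comp hle
    set φ := Subobject.ofMkLEMk (kernel.ι q) M.arrow hle with hφdef
    have hk : kernel.ι f = 0 := by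
      haveI : Epi (pullback.fst (kernel.ι f) (cokernel.π M.arrow)) :=
        Abelian.epi_pullback_of_epi_g _ _
      have hsndq : pullback.snd (kernel.ι f) (cokernel.π M.arrow) ≫ q = 0 := by
        rw [hq, ← Category.assoc, ← pullback.condition, Category.assoc, kernel.condition,
          comp_zero]
      have hw := kernel.lift_ι q _ hsndq
      set w := kernel.lift q _ hsndq with hwdef
      rw [← cancel_epi (pullback.fst (kernel.ι f) (cokernel.π M.arrow)), comp_zero]
      calc pullback.fst (kernel.ι f) (cokernel.π M.arrow) ≫ kernel.ι f
          = pullback.snd (kernel.ι f) (cokernel.π M.arrow) ≫ cokernel.π M.arrow :=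
            pullback.condition
        _ = (w ≫ kernel.ι q) ≫ cokernel.π M.arrow := by rw [hw]
        _ = ((w ≫ φ) ≫ M.arrow) ≫ cokernel.π M.arrow := by
            rw [Category.assoc w φ M.arrow, hφ]
        _ = (w ≫ φ) ≫ (M.arrow ≫ cokernel.π M.arrow) := by rw [Category.assoc]
        _ = 0 := by rw [cokernel.condition, comp_zero]
    haveI : Mono f := Abelian.mono_of_kernel_ι_eq_zero f hk
    exact isIso_of_mono_of_epi f

end Aux

section Aux2

variable {C : Type u} [Category.{v} C] [Abelian C]

/-- Dévissage: a simple subquotient of the middle of a "short exact situation" is a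
subquotient of one of the two ends. -/
lemma aux_subquot_ext {K A V S : C} (u : K ⟶ A) (hu : Mono u) (e : A ⟶ V)
    (hlift : ∀ {T' : C} (t : T' ⟶ A), t ≫ e = 0 → ∃ s : T' ⟶ K, s ≫ u = t)
    (hS : Simple S) (hsq : IsSubquotient S A) :
    IsSubquotient S K ∨ IsSubquotient S V := by
  obtain ⟨Cc, c, q, hc, hq⟩ := hsq
  set g := c ≫ e with hg
  have hd : (kernel.ι g ≫ c) ≫ e = 0 := by
    rw [Category.assoc, ← hg, kernel.condition]
  obtain ⟨s₀, hs₀⟩ := hlift (kernel.ι g ≫ c) hd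
  by_cases h0 : kernel.ι g ≫ q = 0
  · right
    -- q descends to the image of g
    haveI : Epi (Abelian.factorThruImage g) := inferInstance
    have h1 : kernel.ι (Abelian.factorThruImage g) ≫ g = 0 := by
      have h1' : kernel.ι (Abelian.factorThruImage g) ≫
          (Abelian.factorThruImage g ≫ Abelian.image.ι g) = 0 := by
        rw [← Category.assoc, kernel.condition, zero_comp]
      rwa [Abelian.image.fac] at h1'
    have h2 : kernel.ι (Abelian.factorThruImage g) ≫ q = 0 := by
      have := kernel.lift_ι g _ h1
      rw [← this, Category.assoc, h0, comp_zero]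
    set r := Abelian.epiDesc (Abelian.factorThruImage g) q h2 with hr
    have hfr : Abelian.factorThruImage g ≫ r = q := Abelian.comp_epiDesc _ _ _
    haveI : Epi r := epi_of_epi_fac hfr
    exact ⟨Abelian.image g, Abelian.image.ι g, r, inferInstance, inferInstance⟩
  · left
    haveI : Mono s₀ := by
      have : Mono (s₀ ≫ u) := by rw [hs₀]; exact mono_comp _ _
      exact mono_of_mono s₀ u
    haveI : Epi (kernel.ι g ≫ q) := epi_of_nonzero_to_simple h0
    exact ⟨kernel g, s₀, kernel.ι g ≫ q, inferInstance, inferInstance⟩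

lemma aux_simple_subquot_iso {V S : C} (hV : Simple V) (hS : Simple S)
    (hsq : IsSubquotient S V) : Nonempty (S ≅ V) := by
  obtain ⟨Cc, c, q, hc, hq⟩ := hsq
  haveI := hc; haveI := hq
  have hc0 : c ≠ 0 := by
    intro h
    have hz : IsZero Cc := aux_isZero_of_mono_zero c hc h
    exact (Simple.not_isZero S) (aux_isZero_of_epi_zero q hq (hz.eq_of_src _ _))
  haveI : IsIso c := isIso_of_mono_of_nonzero hc0
  haveI : Simple Cc := Simple.of_iso (asIso c)
  have hq0 : q ≠ 0 := by
    intro h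
    exact (Simple.not_isZero S) (aux_isZero_of_epi_zero q hq h)
  haveI : IsIso q := isIso_of_epi_of_nonzero hq0
  exact ⟨(asIso q).symm ≪≫ asIso c⟩

end Aux2

section Purity

variable {C : Type u} [Category.{v} C] [Abelian C]

/-- Key dévissage lemma: if every simple subobject of `B` has weight `≥ n` and extensions of
low weight by high weight split, then every simple quotient of every subobject of `B` has
weight `≥ n`. -/
lemma aux_mk_assoc {W X Y Z : C} (f : W ⟶ X) (g : X ⟶ Y) (h : Y ⟶ Z)
    [Mono f] [Mono g] [Mono h] :
    Subobject.mk ((f ≫ g) ≫ h) = Subobject.mk (f ≫ g ≫ h) :=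
  le_antisymm (Subobject.mk_le_mk_of_comm (𝟙 _) (by simp))
    (Subobject.mk_le_mk_of_comm (𝟙 _) (by simp))

lemma aux_purity
    (finLen : ∀ X : C, IsNoetherianObject X ∧ IsArtinianObject X)
    (wt : C → ℤ)
    (hmixed : ∀ (L L' : C), Simple L → Simple L' → wt L ≤ wt L' →
      ∀ (E : C) (f : L' ⟶ E) (g : E ⟶ L) (zero : f ≫ g = 0),
        (ShortComplex.mk f g zero).ShortExact →
          Nonempty (ShortComplex.mk f g zero).Splitting)
    (n : ℤ) (B : C)
    (hB : ∀ (V : C), Simple V → ∀ v : V ⟶ B, Mono v → n ≤ wt V) :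
    ∀ (P : C) (iP : P ⟶ B), Mono iP → ∀ (S : C), Simple S → ∀ (e : P ⟶ S), Epi e → n ≤ wt S := by
  haveI := (finLen B).2
  have main : ∀ K : Subobject B, ∀ (P : C) (iP : P ⟶ B) (_ : Mono iP) (S : C) (_ : Simple S)
      (e : P ⟶ S) (_ : Epi e) (_ : Mono (kernel.ι e ≫ iP)),
      Subobject.mk (kernel.ι e ≫ iP) = K → n ≤ wt S := by
    intro K
    induction K using WellFounded.induction (wellFounded_lt (α := Subobject B)) with
    | _ K IH =>
    intro P iP hiP S hS e he hm hK
    haveI := hiP; haveI := hS; haveI := he; haveI := hm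
    by_contra hlt
    push_neg at hlt
    by_cases hz : IsZero (kernel e)
    · have h0 : kernel.ι e = 0 := hz.eq_of_src _ _
      haveI : Mono e := Abelian.mono_of_kernel_ι_eq_zero e h0
      haveI : IsIso e := isIso_of_mono_of_epi e
      haveI : Mono (inv e ≫ iP) := mono_comp _ _
      exact absurd (hB S hS (inv e ≫ iP) inferInstance) (not_le.mpr hlt)
    · haveI := (finLen (kernel e)).1
      obtain ⟨T, t, hT, ht⟩ := aux_exists_simple_quotient hz
      haveI := hT; haveI := ht
      -- the kernel of t, viewed inside B, is strictly smaller than K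
      haveI : Mono (kernel.ι t ≫ kernel.ι e ≫ iP) := mono_comp _ _
      have hno : ∀ w : kernel e ⟶ kernel t, w ≫ kernel.ι t = 𝟙 (kernel e) → False := by
        intro w hw
        have ht0 : t = 0 := by
          have : kernel.ι t ≫ t = 0 := kernel.condition t
          calc t = (w ≫ kernel.ι t) ≫ t := by rw [hw, Category.id_comp]
            _ = w ≫ (kernel.ι t ≫ t) := Category.assoc _ _ _
            _ = 0 := by rw [this, comp_zero]
        exact (Simple.not_isZero T) (aux_isZero_of_epi_zero t ht ht0)
      have hMK : Subobject.mk (kernel.ι t ≫ kernel.ι e ≫ iP) < Subobject.mk (kernel.ι e ≫ iP) := by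
        refine lt_of_le_of_ne (Subobject.mk_le_mk_of_comm (kernel.ι t) rfl) ?_
        intro heq
        have hle : Subobject.mk (kernel.ι e ≫ iP) ≤ Subobject.mk (kernel.ι t ≫ kernel.ι e ≫ iP) :=
          le_of_eq heq.symm
        have hcomp := Subobject.ofMkLEMk_comp hle
        set w := Subobject.ofMkLEMk (kernel.ι e ≫ iP) (kernel.ι t ≫ kernel.ι e ≫ iP) hle
        apply hno w
        have : (w ≫ kernel.ι t) ≫ (kernel.ι e ≫ iP) = 𝟙 (kernel e) ≫ (kernel.ι e ≫ iP) := by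
          rw [Category.assoc, hcomp, Category.id_comp]
      -- cancel the mono
        exact (cancel_mono (kernel.ι e ≫ iP)).mp this
      rw [hK] at hMK
      by_cases hwT : wt T < n
      · exact absurd (IH _ hMK (kernel e) (kernel.ι e ≫ iP) inferInstance T hT t ht
          inferInstance rfl) (not_le.mpr hwT)
      · push_neg at hwT
        -- form the quotient P / (kernel t) and split
        set m'' := kernel.ι t ≫ kernel.ι e with hm''
        haveI : Mono m'' := mono_comp _ _
        have hm''e : m'' ≫ e = 0 := by
          rw [hm'', Category.assoc, kernel.condition, comp_zero]
        set π := cokernel.π m'' with hπ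
        set ebar := cokernel.desc m'' e hm''e with hebar
        have hπe : π ≫ ebar = e := cokernel.π_desc _ _ _
        haveI : Epi ebar := epi_of_epi_fac hπe
        have hκπ0 : kernel.ι t ≫ (kernel.ι e ≫ π) = 0 := by
          rw [← Category.assoc, ← hm'', cokernel.condition]
        set j := Abelian.epiDesc t (kernel.ι e ≫ π) hκπ0 with hj
        have htj : t ≫ j = kernel.ι e ≫ π := Abelian.comp_epiDesc _ _ _
        have hje : j ≫ ebar = 0 := by
          rw [← cancel_epi t, ← Category.assoc, htj, Category.assoc, hπe, kernel.condition,
            comp_zero]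
        haveI hjm : Mono j := by
          rcases aux_from_simple hT j with h0 | hm
          · exfalso
            have : kernel.ι e ≫ π = 0 := by rw [← htj, h0, comp_zero]
            obtain ⟨w, hw⟩ : ∃ w : kernel e ⟶ kernel t, w ≫ m'' = kernel.ι e :=
              ⟨Abelian.monoLift m'' (kernel.ι e) this, Abelian.monoLift_comp _ _ _⟩
            apply hno w
            rw [hm''] at hw
            have : (w ≫ kernel.ι t) ≫ kernel.ι e = 𝟙 (kernel e) ≫ kernel.ι e := by
              rw [Category.assoc, hw, Category.id_comp]
            exact (cancel_mono (kernel.ι e)).mp this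
          · exact hm
        -- exactness of T ⟶ P/M ⟶ S
        have hexact : (ShortComplex.mk j ebar hje).Exact := by
          apply ShortComplex.exact_of_f_is_kernel
          apply KernelFork.IsLimit.ofι' j hje
          intro D u hu
          have hsnd : pullback.snd u π ≫ e = 0 := by
            have h' : pullback.snd u π ≫ (π ≫ ebar) = 0 := by
              rw [← Category.assoc, ← pullback.condition, Category.assoc, hu, comp_zero]
            rwa [hπe] at h'
          set w' := kernel.lift e _ hsnd with hw'def
          have hw' : w' ≫ kernel.ι e = pullback.snd u π := kernel.lift_ι _ _ _
          haveI : Epi (pullback.fst u π) := Abelian.epi_pullback_of_epi_g _ _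
          have hker : kernel.ι (pullback.fst u π) ≫ (w' ≫ t) = 0 := by
            rw [← cancel_mono j]
            calc (kernel.ι (pullback.fst u π) ≫ (w' ≫ t)) ≫ j
                = kernel.ι (pullback.fst u π) ≫ w' ≫ (t ≫ j) := by
                  simp only [Category.assoc]
              _ = kernel.ι (pullback.fst u π) ≫ w' ≫ kernel.ι e ≫ π := by rw [htj]
              _ = kernel.ι (pullback.fst u π) ≫ (w' ≫ kernel.ι e) ≫ π := by
                  simp only [Category.assoc]
              _ = kernel.ι (pullback.fst u π) ≫ pullback.snd u π ≫ π := by rw [hw']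
              _ = kernel.ι (pullback.fst u π) ≫ pullback.fst u π ≫ u := by
                  rw [← pullback.condition]
              _ = 0 ≫ j := by
                  rw [← Category.assoc, kernel.condition, zero_comp, zero_comp]
          refine ⟨Abelian.epiDesc (pullback.fst u π) (w' ≫ t) hker, ?_⟩
          rw [← cancel_epi (pullback.fst u π)]
          calc pullback.fst u π ≫ Abelian.epiDesc (pullback.fst u π) (w' ≫ t) hker ≫ j
              = (pullback.fst u π ≫ Abelian.epiDesc (pullback.fst u π) (w' ≫ t) hker) ≫ j := by
                simp only [Category.assoc]
            _ = (w' ≫ t) ≫ j := by rw [Abelian.comp_epiDesc]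
            _ = w' ≫ (t ≫ j) := Category.assoc _ _ _
            _ = w' ≫ kernel.ι e ≫ π := by rw [htj]
            _ = (w' ≫ kernel.ι e) ≫ π := by simp only [Category.assoc]
            _ = pullback.snd u π ≫ π := by rw [hw']
            _ = pullback.fst u π ≫ u := by rw [← pullback.condition]
        have hSE : (ShortComplex.mk j ebar hje).ShortExact := ⟨hexact⟩
        obtain ⟨spl⟩ := hmixed S T hS hT (le_trans (le_of_lt hlt) hwT) _ j ebar hje hSE
        have hss : spl.s ≫ ebar = 𝟙 S := spl.s_g
        haveI : Mono spl.s := mono_of_mono_fac hss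
        -- new presentation of S with smaller kernel
        haveI : Mono (pullback.snd spl.s π) := inferInstance
        haveI : Epi (pullback.fst spl.s π) := Abelian.epi_pullback_of_epi_g _ _
        haveI : Mono (pullback.snd spl.s π ≫ iP) := mono_comp _ _
        haveI : Mono (kernel.ι (pullback.fst spl.s π) ≫ pullback.snd spl.s π ≫ iP) :=
          mono_comp _ _
        have hM2 : Subobject.mk (kernel.ι (pullback.fst spl.s π) ≫ pullback.snd spl.s π ≫ iP) ≤
            Subobject.mk (m'' ≫ iP) := by
          have hc0 : (kernel.ι (pullback.fst spl.s π) ≫ pullback.snd spl.s π) ≫ π = 0 := by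
            rw [Category.assoc, ← pullback.condition, ← Category.assoc, kernel.condition,
              zero_comp]
          have := Abelian.monoLift_comp m'' _ hc0
          exact Subobject.mk_le_mk_of_comm (Abelian.monoLift m'' _ hc0)
            (by rw [← Category.assoc, this, Category.assoc])
        haveI : Mono (m'' ≫ iP) := mono_comp _ _
        have hM2K : Subobject.mk (kernel.ι (pullback.fst spl.s π) ≫ pullback.snd spl.s π ≫ iP)
            < K := by
          refine lt_of_le_of_lt hM2 ?_
          have heq : Subobject.mk (m'' ≫ iP) = Subobject.mk (kernel.ι t ≫ kernel.ι e ≫ iP) :=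
            aux_mk_assoc (kernel.ι t) (kernel.ι e) iP
          rw [heq]
          exact hMK
        exact absurd (IH _ hM2K (pullback spl.s π) (pullback.snd spl.s π ≫ iP) inferInstance
          S hS (pullback.fst spl.s π) inferInstance inferInstance rfl) (not_le.mpr hlt)
  intro P iP hiP S hS e he
  haveI := hiP; haveI := he
  haveI : Mono (kernel.ι e ≫ iP) := mono_comp _ _
  exact main _ P iP hiP S hS e he inferInstance rfl

end Purity

theorem stmt2 {C : Type u} [Category.{v} C] [Abelian C]
    -- finite length
    (_finLen : ∀ X : C, IsNoetherianObject X ∧ IsArtinianObject X)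
    (wt : C → ℤ)
    (_hwt : ∀ (L L' : C), Simple L → Simple L' → Nonempty (L ≅ L') → wt L = wt L')
    -- mixedness: Ext¹(L,L') = 0 if wt L' ≥ wt L
    (_hmixed : ∀ (L L' : C), Simple L → Simple L' → wt L ≤ wt L' →
      ∀ (E : C) (f : L' ⟶ E) (g : E ⟶ L) (zero : f ≫ g = 0),
        (ShortComplex.mk f g zero).ShortExact →
          Nonempty (ShortComplex.mk f g zero).Splitting)
    -- the weight filtration X ↦ W n X = X_{≤ n}, functorial in X
    (W : ℤ → C ⥤ C) (ι : ∀ n : ℤ, W n ⟶ 𝟭 C)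
    (_hmono : ∀ (n : ℤ) (X : C), Mono ((ι n).app X))
    (incl : ∀ n : ℤ, W (n - 1) ⟶ W n)
    (_hincl : ∀ n : ℤ, incl n ≫ ι n = ι (n - 1))
    -- exhaustive and separated
    (_hbdd : ∀ X : C, (∃ N : ℤ, ∀ m : ℤ, N ≤ m → IsIso ((ι m).app X)) ∧
      (∃ N : ℤ, ∀ m : ℤ, m ≤ N → IsZero ((W m).obj X)))
    -- W n X has weights ≤ n, and is the largest such subobject
    (_hwtle : ∀ (n : ℤ) (X S : C), Simple S → IsSubquotient S ((W n).obj X) → wt S ≤ n)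
    (_hlargest : ∀ (n : ℤ) (X Y : C) (f : Y ⟶ X), Mono f →
      (∀ S : C, Simple S → IsSubquotient S Y → wt S ≤ n) →
      ∃ g : Y ⟶ (W n).obj X, g ≫ (ι n).app X = f)
    -- graded pieces: gr_n X = (W n X)/(W (n-1) X), functorially
    (G : ℤ → C ⥤ C) (p : ∀ n : ℤ, W n ⟶ G n)
    (_hses : ∀ (n : ℤ) (X : C), ∃ zero : (incl n).app X ≫ (p n).app X = 0,
      (ShortComplex.mk ((incl n).app X) ((p n).app X) zero).ShortExact)
    {X Y : C} (f : X ⟶ Y) (hf : ∀ n : ℤ, (G n).map f = 0) :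
    f = 0 := by
  -- the components of `incl` are monos
  have hinclmono : ∀ (n : ℤ) (Z : C), Mono ((incl n).app Z) := by
    intro n Z
    haveI := _hmono n Z
    haveI := _hmono (n - 1) Z
    have h := congrArg (fun τ : W (n-1) ⟶ 𝟭 C => τ.app Z) (_hincl n)
    simp only [NatTrans.comp_app] at h
    exact mono_of_mono_fac h
  -- simple subobjects of `G n Z` have weight ≥ n
  have hGsub : ∀ (m : ℤ) (Z V : C), Simple V → ∀ v : V ⟶ (G m).obj Z, Mono v → m ≤ wt V := by
    intro m Z V hV v hv
    haveI := hv
    by_contra hcon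
    push_neg at hcon
    obtain ⟨zero, hse⟩ := _hses m Z
    haveI hpepi : Epi ((p m).app Z) := hse.epi_g
    haveI hinclm : Mono ((incl m).app Z) := hinclmono m Z
    haveI : Epi (pullback.fst v ((p m).app Z)) := Abelian.epi_pullback_of_epi_g _ _
    haveI : Mono (pullback.snd v ((p m).app Z)) := inferInstance
    haveI := _hmono m Z
    haveI : Mono (pullback.snd v ((p m).app Z) ≫ (ι m).app Z) := mono_comp _ _
    -- the map from W (m-1) Z into the pullback
    have hu0 : (0 : (W (m-1)).obj Z ⟶ V) ≫ v = (incl m).app Z ≫ (p m).app Z := by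
      rw [zero_comp, zero]
    set u := pullback.lift 0 ((incl m).app Z) hu0 with hudef
    have hufst : u ≫ pullback.fst v ((p m).app Z) = 0 := pullback.lift_fst _ _ _
    have husnd : u ≫ pullback.snd v ((p m).app Z) = (incl m).app Z := pullback.lift_snd _ _ _
    haveI : Mono u := mono_of_mono_fac husnd
    -- lifting property of u against fst
    have hlift : ∀ {T' : C} (t : T' ⟶ pullback v ((p m).app Z)),
        t ≫ pullback.fst v ((p m).app Z) = 0 → ∃ s, s ≫ u = t := by
      intro T' t ht
      have h1 : (t ≫ pullback.snd v ((p m).app Z)) ≫ (p m).app Z = 0 := by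
        rw [Category.assoc, ← pullback.condition, ← Category.assoc, ht, zero_comp]
      haveI := hse.mono_f
      refine ⟨hse.exact.lift (t ≫ pullback.snd v ((p m).app Z)) h1, ?_⟩
      apply pullback.hom_ext
      · rw [Category.assoc, hufst, comp_zero, ht]
      · rw [Category.assoc, husnd]
        exact hse.exact.lift_f _ _
    -- all simple subquotients of the pullback have weight ≤ m - 1
    have hsub : ∀ S : C, Simple S → IsSubquotient S (pullback v ((p m).app Z)) → wt S ≤ m - 1 := by
      intro S hS hsq
      rcases aux_subquot_ext u inferInstance (pullback.fst v ((p m).app Z)) hlift hS hsq with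
        h1 | h2
      · exact _hwtle (m-1) Z S hS h1
      · obtain ⟨iso⟩ := aux_simple_subquot_iso hV hS h2
        have := _hwt S V hS hV ⟨iso⟩
        omega
    obtain ⟨a, ha⟩ := _hlargest (m-1) Z (pullback v ((p m).app Z))
      (pullback.snd v ((p m).app Z) ≫ (ι m).app Z) inferInstance hsub
    -- a ≫ incl = snd
    have hincl' : (incl m).app Z ≫ (ι m).app Z = (ι (m-1)).app Z := by
      have h := congrArg (fun τ : W (m-1) ⟶ 𝟭 C => τ.app Z) (_hincl m)
      simpa using h
    have ha' : a ≫ (incl m).app Z = pullback.snd v ((p m).app Z) := by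
      rw [← cancel_mono ((ι m).app Z), Category.assoc, hincl', ha]
    have hfst0 : pullback.fst v ((p m).app Z) ≫ v = 0 := by
      rw [pullback.condition, ← ha', Category.assoc, zero, comp_zero]
    have : pullback.fst v ((p m).app Z) = 0 := by
      rw [← cancel_mono v, hfst0, zero_comp]
    exact (Simple.not_isZero V) (aux_isZero_of_epi_zero _ inferInstance this)
  -- maps from G m Z to anything of weight ≤ m - 1 vanish
  have key : ∀ (m : ℤ) (Z' Z : C) (k : (G m).obj Z' ⟶ Z),
      (∀ S : C, Simple S → IsSubquotient S Z → wt S ≤ m - 1) → k = 0 := by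
    intro m Z' Z k hZ
    by_contra hk
    have him : ¬ IsZero (Abelian.image k) := by
      intro h
      apply hk
      rw [← Abelian.image.fac k, h.eq_of_src (Abelian.image.ι k) 0, comp_zero]
    haveI := (_finLen (Abelian.image k)).2
    obtain ⟨Sν, hSν⟩ := exists_simple_subobject him
    haveI := hSν
    haveI : Mono (Sν.arrow ≫ Abelian.image.ι k) := mono_comp _ _
    have hwS : wt (Sν : C) ≤ m - 1 :=
      hZ _ hSν ⟨(Sν : C), Sν.arrow ≫ Abelian.image.ι k, 𝟙 _, inferInstance, inferInstance⟩
    haveI : Epi (pullback.fst Sν.arrow (Abelian.factorThruImage k)) :=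
      Abelian.epi_pullback_of_epi_g _ _
    haveI : Mono (pullback.snd Sν.arrow (Abelian.factorThruImage k)) := inferInstance
    have := aux_purity _finLen wt _hmixed m ((G m).obj Z') (hGsub m Z')
      (pullback Sν.arrow (Abelian.factorThruImage k))
      (pullback.snd Sν.arrow (Abelian.factorThruImage k)) inferInstance
      (Sν : C) hSν (pullback.fst Sν.arrow (Abelian.factorThruImage k)) inferInstance
    omega
  -- main induction
  obtain ⟨⟨N₁, hN₁⟩, ⟨N₀, hN₀⟩⟩ := _hbdd X
  have step : ∀ n : ℤ, (W (n-1)).map f = 0 → (W n).map f = 0 := by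
    intro n hprev
    obtain ⟨zeroX, hseX⟩ := _hses n X
    obtain ⟨zeroY, hseY⟩ := _hses n Y
    have h1 : (W n).map f ≫ (p n).app Y = 0 := by
      rw [(p n).naturality f, hf n, comp_zero]
    haveI := hseY.mono_f
    set g := hseY.exact.lift ((W n).map f) h1 with hgdef
    have hg : g ≫ (incl n).app Y = (W n).map f := hseY.exact.lift_f _ _
    have h2 : (incl n).app X ≫ g = 0 := by
      haveI := hinclmono n Y
      rw [← cancel_mono ((incl n).app Y), Category.assoc, hg, zero_comp]
      have := (incl n).naturality f
      rw [← this, hprev, zero_comp]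
    haveI := hseX.epi_g
    set k := hseX.exact.desc g h2 with hkdef
    have hk : (p n).app X ≫ k = g := hseX.exact.g_desc _ _
    have hk0 : k = 0 := key n X _ k (fun S hS hsq => _hwtle (n-1) Y S hS hsq)
    rw [← hg, ← hk, hk0, comp_zero, zero_comp]
  have base : ∀ n : ℤ, n ≤ N₀ → (W n).map f = 0 := fun n hn => (hN₀ n hn).eq_of_src _ _
  have hP : ∀ n : ℤ, (W n).map f = 0 := by
    intro n
    rcases le_or_gt n N₀ with h | h
    · exact base n h
    · have : ∀ m : ℤ, N₀ ≤ m → (W m).map f = 0 := by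
        refine Int.le_induction (base N₀ le_rfl) ?_
        intro k _ ihk
        apply step
        rw [show k + 1 - 1 = k by omega]
        exact ihk
      exact this n h.le
  haveI := hN₁ N₁ le_rfl
  rw [← cancel_epi ((ι N₁).app X)]
  have hnat := (ι N₁).naturality f
  simp only [Functor.id_map] at hnat
  rw [← hnat, hP N₁, zero_comp, comp_zero]
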